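/- For 0 ≤ ε ≤ 1/2 and 0 < μ < 1 with (1+ε)μ ≤ 1, the binary relative entropy satisfies D((1−ε)μ‖μ) ≥ με²/4 and D((1+ε)μ‖μ) ≥ με²/4. -/

import Mathlib

noncomputable section

/-- Binary relative entropy (natural logarithm). -/
def relD (α μ : ℝ) : ℝ := α * Real.log (α / μ) + (1 - α) * Real.log ((1 - α) / (1 - μ))

private lemma aux_log_div (b c : ℝ) (hb : 0 ≤ b) (hc : 0 < c) :
    b - c ≤ b * Real.log (b / c) := by
  rcases eq_or_lt_of_le hb with h | h
  · simp [← h]; linarith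
  · have h1 : Real.log (c / b) ≤ c / b - 1 := Real.log_le_sub_one_of_pos (by positivity)
    have h2 : Real.log (b / c) = - Real.log (c / b) := by
      rw [← Real.log_inv]; congr 1; rw [inv_div]
    have h3 : b * Real.log (c / b) ≤ b * (c / b - 1) :=
      mul_le_mul_of_nonneg_left h1 h.le
    have h4 : b * (c / b - 1) = c - b := by field_simp
    rw [h2]
    nlinarith
  
private lemma aux_plus {x : ℝ} (hx0 : 0 ≤ x) (hx1 : x ≤ 1/2) :
    x ^ 2 / 4 ≤ (1 + x) * Real.log (1 + x) - x := by
  set F : ℝ → ℝ := fun x => (1 + x) * Real.log (1 + x) - x - x ^ 2 / 4 with hF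
  have hderiv : ∀ y ∈ Set.Ioo (0:ℝ) (1/2),
      HasDerivAt F (Real.log (1 + y) - y / 2) y := by
    intro y hy
    have hy1 : (0:ℝ) < 1 + y := by linarith [hy.1]
    have h1 : HasDerivAt (fun z : ℝ => 1 + z) 1 y := by
      simpa using (hasDerivAt_id y).const_add 1
    have h2 : HasDerivAt (fun z : ℝ => Real.log (1 + z)) (1 / (1 + y)) y := by
      simpa [Function.comp_def] using (Real.hasDerivAt_log hy1.ne').comp y h1
    have h3 : HasDerivAt (fun z : ℝ => (1 + z) * Real.log (1 + z))
        (1 * Real.log (1 + y) + (1 + y) * (1 / (1 + y))) y := h1.mul h2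
    have h4 : HasDerivAt (fun z : ℝ => z ^ 2 / 4) (2 * y / 4) y := by
      simpa using (hasDerivAt_pow 2 y).div_const 4
    have h5 := (h3.sub (hasDerivAt_id y)).sub h4
    convert h5 using 1
    · rfl
    · rfl
    · rfl
    field_simp
    ring
  have hcont : ContinuousOn F (Set.Icc 0 (1/2)) := by
    apply ContinuousOn.sub
    apply ContinuousOn.sub
    · exact ContinuousOn.mul (by fun_prop) (ContinuousOn.log (by fun_prop)
        (fun y hy => by intro h; have := hy.1; linarith))
    · exact continuousOn_id
    · fun_prop
  have hmono : MonotoneOn F (Set.Icc 0 (1/2)) := by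
    apply monotoneOn_of_deriv_nonneg (convex_Icc 0 (1/2)) hcont
    · intro y hy
      rw [interior_Icc] at hy
      exact (hderiv y hy).differentiableAt.differentiableWithinAt
    · intro y hy
      rw [interior_Icc] at hy
      rw [(hderiv y hy).deriv]
      have hy1 : (0:ℝ) < 1 + y := by linarith [hy.1]
      have : Real.log (1 / (1 + y)) ≤ 1 / (1 + y) - 1 :=
        Real.log_le_sub_one_of_pos (by positivity)
      rw [Real.log_div one_ne_zero hy1.ne'] at this
      simp only [Real.log_one] at this
      have hy2 : 1 + y ≤ 2 := by linarith [hy.2]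
      have : y / (1 + y) ≤ Real.log (1 + y) := by
        have := this
        have h' : 1 - 1 / (1 + y) = y / (1 + y) := by field_simp; ring
        linarith [this]
      have : y / 2 ≤ y / (1 + y) := by
        apply div_le_div_of_nonneg_left hy.1.le hy1 hy2
      linarith [this, ‹y / (1 + y) ≤ Real.log (1 + y)›]
  have h0 : F 0 = 0 := by simp [hF]
  have := hmono (Set.mem_Icc.mpr ⟨le_rfl, by norm_num⟩) (Set.mem_Icc.mpr ⟨hx0, hx1⟩) hx0
  rw [h0] at this
  simp only [hF] at this
  linarith

private lemma aux_minus {x : ℝ} (hx0 : 0 ≤ x) (hx1 : x ≤ 1/2) :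
    x ^ 2 / 4 ≤ (1 - x) * Real.log (1 - x) + x := by
  set F : ℝ → ℝ := fun x => (1 - x) * Real.log (1 - x) + x - x ^ 2 / 4 with hF
  have hderiv : ∀ y ∈ Set.Ioo (0:ℝ) (1/2),
      HasDerivAt F (- Real.log (1 - y) - y / 2) y := by
    intro y hy
    have hy1 : (0:ℝ) < 1 - y := by linarith [hy.2]
    have h1 : HasDerivAt (fun z : ℝ => 1 - z) (-1) y := by
      simpa using (hasDerivAt_id y).const_sub 1
    have h2 : HasDerivAt (fun z : ℝ => Real.log (1 - z)) (-1 / (1 - y)) y := by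
      have := (Real.hasDerivAt_log hy1.ne').comp y h1
      simpa [div_eq_mul_inv, mul_comm, Function.comp_def] using this
    have h3 : HasDerivAt (fun z : ℝ => (1 - z) * Real.log (1 - z))
        ((-1) * Real.log (1 - y) + (1 - y) * (-1 / (1 - y))) y := h1.mul h2
    have h4 : HasDerivAt (fun z : ℝ => z ^ 2 / 4) (2 * y / 4) y := by
      simpa using (hasDerivAt_pow 2 y).div_const 4
    have h5 := (h3.add (hasDerivAt_id y)).sub h4
    convert h5 using 1
    · rfl
    · rfl
    · rfl
    field_simp
    ring
  have hcont : ContinuousOn F (Set.Icc 0 (1/2)) := by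
    apply ContinuousOn.sub
    apply ContinuousOn.add
    · exact ContinuousOn.mul (by fun_prop) (ContinuousOn.log (by fun_prop)
        (fun y hy => by intro h; have := hy.2; linarith))
    · exact continuousOn_id
    · fun_prop
  have hmono : MonotoneOn F (Set.Icc 0 (1/2)) := by
    apply monotoneOn_of_deriv_nonneg (convex_Icc 0 (1/2)) hcont
    · intro y hy
      rw [interior_Icc] at hy
      exact (hderiv y hy).differentiableAt.differentiableWithinAt
    · intro y hy
      rw [interior_Icc] at hy
      rw [(hderiv y hy).deriv]
      have hy1 : (0:ℝ) < 1 - y := by linarith [hy.2]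
      have hlog : Real.log (1 - y) ≤ (1 - y) - 1 := Real.log_le_sub_one_of_pos hy1
      linarith [hy.1]
  have h0 : F 0 = 0 := by simp [hF]
  have := hmono (Set.mem_Icc.mpr ⟨le_rfl, by norm_num⟩) (Set.mem_Icc.mpr ⟨hx0, hx1⟩) hx0
  rw [h0] at this
  simp only [hF] at this
  linarith

/-- For `0 ≤ ε ≤ 1/2` and `0 < μ < 1` with `(1+ε)μ ≤ 1`, the binary relative entropy
satisfies `D((1−ε)μ‖μ) ≥ με²/4` and `D((1+ε)μ‖μ) ≥ με²/4`. -/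
theorem relD_lower_bound (ε μ : ℝ) (hε0 : 0 ≤ ε) (hε : ε ≤ 1/2)
    (hμ0 : 0 < μ) (hμ1 : μ < 1) (h1 : (1 + ε) * μ ≤ 1) :
    μ * ε ^ 2 / 4 ≤ relD ((1 - ε) * μ) μ ∧ μ * ε ^ 2 / 4 ≤ relD ((1 + ε) * μ) μ := by
  have hμ1' : (0:ℝ) < 1 - μ := by linarith
  constructor
  · -- minus side
    have hlog1 : Real.log ((1 - ε) * μ / μ) = Real.log (1 - ε) := by
      rw [mul_div_assoc, div_self hμ0.ne', mul_one]
    have hb : (0:ℝ) ≤ 1 - (1 - ε) * μ := by nlinarith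
    have ht2 : (1 - (1 - ε) * μ) - (1 - μ) ≤
        (1 - (1 - ε) * μ) * Real.log ((1 - (1 - ε) * μ) / (1 - μ)) :=
      aux_log_div _ _ hb hμ1'
    have hB := aux_minus hε0 hε
    have hBμ := mul_le_mul_of_nonneg_left hB hμ0.le
    unfold relD
    rw [hlog1]
    nlinarith [ht2, hBμ]
  · -- plus side
    have hlog1 : Real.log ((1 + ε) * μ / μ) = Real.log (1 + ε) := by
      rw [mul_div_assoc, div_self hμ0.ne', mul_one]
    have hb : (0:ℝ) ≤ 1 - (1 + ε) * μ := by linarith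
    have ht2 : (1 - (1 + ε) * μ) - (1 - μ) ≤
        (1 - (1 + ε) * μ) * Real.log ((1 - (1 + ε) * μ) / (1 - μ)) :=
      aux_log_div _ _ hb hμ1'
    have hA := aux_plus hε0 hε
    have hAμ := mul_le_mul_of_nonneg_left hA hμ0.le
    unfold relD
    rw [hlog1]
    nlinarith [ht2, hAμ]
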